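/- Under the permutation null distribution, for all integers 0 ≤ t1 < t2 ≤ n, the expectation of U_w^π(t1,t2) equals n(t2 − t1 − 1)(n − t2 + t1 − 1)·r0/(n−2), and the expectation of U_diff^π(t1,t2) equals (n−1)(2(t2 − t1) − n)·r0. -/

import Mathlib

open Finset

namespace RING

/-- `U1^π(t1,t2)`: sum of `R (π i) (π j)` over indices (1-based `i,j ∈ {1,…,n}`,
represented by `Fin n` with `i` standing for index `i+1`) with `t1 < i ≤ t2` and
`t1 < j ≤ t2`. -/
noncomputable def U1 (n : ℕ) (R : Fin n → Fin n → ℝ) (π : Equiv.Perm (Fin n))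
    (t1 t2 : ℕ) : ℝ :=
  ∑ i : Fin n, ∑ j : Fin n,
    if t1 ≤ (i : ℕ) ∧ (i : ℕ) < t2 ∧ t1 ≤ (j : ℕ) ∧ (j : ℕ) < t2 then R (π i) (π j) else 0

/-- `U2^π(t1,t2)`: sum of `R (π i) (π j)` over indices with `i ≤ t1` or `i > t2`,
and `j ≤ t1` or `j > t2`. -/
noncomputable def U2 (n : ℕ) (R : Fin n → Fin n → ℝ) (π : Equiv.Perm (Fin n))
    (t1 t2 : ℕ) : ℝ :=
  ∑ i : Fin n, ∑ j : Fin n,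
    if ((i : ℕ) < t1 ∨ t2 ≤ (i : ℕ)) ∧ ((j : ℕ) < t1 ∨ t2 ≤ (j : ℕ)) then R (π i) (π j) else 0

/-- Expectation under the permutation null distribution (uniform over all `n!`
permutations). -/
noncomputable def pexp (n : ℕ) (f : Equiv.Perm (Fin n) → ℝ) : ℝ :=
  (∑ π : Equiv.Perm (Fin n), f π) / (Nat.factorial n)

/-- Variance under the permutation null distribution. -/
noncomputable def pvar (n : ℕ) (f : Equiv.Perm (Fin n) → ℝ) : ℝ :=
  pexp n (fun π => (f π - pexp n f) ^ 2)

/-- Covariance under the permutation null distribution. -/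
noncomputable def pcov (n : ℕ) (f g : Equiv.Perm (Fin n) → ℝ) : ℝ :=
  pexp n (fun π => (f π - pexp n f) * (g π - pexp n g))

/-- `R̄_{i·} = (Σ_j R_{ij})/(n-1)`. -/
noncomputable def Rbar (n : ℕ) (R : Fin n → Fin n → ℝ) (i : Fin n) : ℝ :=
  (∑ j : Fin n, R i j) / ((n : ℝ) - 1)

/-- `r0 = (1/n) Σ_i R̄_{i·}`. -/
noncomputable def r0 (n : ℕ) (R : Fin n → Fin n → ℝ) : ℝ :=
  (∑ i : Fin n, Rbar n R i) / n

/-- `r1² = (1/n) Σ_i R̄_{i·}²`. -/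
noncomputable def r1sq (n : ℕ) (R : Fin n → Fin n → ℝ) : ℝ :=
  (∑ i : Fin n, (Rbar n R i) ^ 2) / n

/-- `r_d² = (1/(n(n-1))) Σ_i Σ_j R_{ij}²`. -/
noncomputable def rdsq (n : ℕ) (R : Fin n → Fin n → ℝ) : ℝ :=
  (∑ i : Fin n, ∑ j : Fin n, (R i j) ^ 2) / ((n : ℝ) * ((n : ℝ) - 1))

/-- `A(t) = 2t(t-1)(n-t)(n-t-1)/((n-2)(n-3))`. -/
noncomputable def A (n t : ℕ) : ℝ :=
  2 * (t : ℝ) * ((t : ℝ) - 1) * ((n : ℝ) - t) * ((n : ℝ) - t - 1) /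
    (((n : ℝ) - 2) * ((n : ℝ) - 3))

/-- `B(t) = 4t(n-t)(t-1)(t-2)(n-1)/((n-2)(n-3))`. -/
noncomputable def B (n t : ℕ) : ℝ :=
  4 * (t : ℝ) * ((n : ℝ) - t) * ((t : ℝ) - 1) * ((t : ℝ) - 2) * ((n : ℝ) - 1) /
    (((n : ℝ) - 2) * ((n : ℝ) - 3))

/-- `U_diff^π = U1^π − U2^π`. -/
noncomputable def Udiff (n : ℕ) (R : Fin n → Fin n → ℝ) (π : Equiv.Perm (Fin n))
    (t1 t2 : ℕ) : ℝ :=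
  U1 n R π t1 t2 - U2 n R π t1 t2

/-- `U_w^π = ((n−t2+t1−1)·U1^π + (t2−t1−1)·U2^π)/(n−2)`. -/
noncomputable def Uw (n : ℕ) (R : Fin n → Fin n → ℝ) (π : Equiv.Perm (Fin n))
    (t1 t2 : ℕ) : ℝ :=
  (((n : ℝ) - t2 + t1 - 1) * U1 n R π t1 t2 + ((t2 : ℝ) - t1 - 1) * U2 n R π t1 t2) /
    ((n : ℝ) - 2)

/-- Standardized `Z_w^π(t1,t2)`. -/
noncomputable def Zw (n : ℕ) (R : Fin n → Fin n → ℝ) (π : Equiv.Perm (Fin n))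
    (t1 t2 : ℕ) : ℝ :=
  (Uw n R π t1 t2 - pexp n (fun σ => Uw n R σ t1 t2)) /
    Real.sqrt (pvar n (fun σ => Uw n R σ t1 t2))

/-- Standardized `Z_diff^π(t1,t2)`. -/
noncomputable def Zdiff (n : ℕ) (R : Fin n → Fin n → ℝ) (π : Equiv.Perm (Fin n))
    (t1 t2 : ℕ) : ℝ :=
  (Udiff n R π t1 t2 - pexp n (fun σ => Udiff n R σ t1 t2)) /
    Real.sqrt (pvar n (fun σ => Udiff n R σ t1 t2))

end RING

section AuxRing

open RING

variable {n : ℕ}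

private lemma exists_perm_two' {i j k l : Fin n} (hij : i ≠ j) (hkl : k ≠ l) :
    ∃ σ : Equiv.Perm (Fin n), σ k = i ∧ σ l = j := by
  set τ : Equiv.Perm (Fin n) := Equiv.swap k i with hτ
  have hτk : τ k = i := Equiv.swap_apply_left k i
  have hτl : τ l ≠ i := by
    intro h
    apply hkl
    have h2 := congrArg τ h
    rw [hτ, Equiv.swap_apply_self] at h2
    rw [h2, Equiv.swap_apply_right]
  refine ⟨Equiv.swap (τ l) j * τ, ?_, ?_⟩
  · simp only [Equiv.Perm.mul_apply, hτk]
    exact Equiv.swap_apply_of_ne_of_ne (Ne.symm hτl) hij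
  · simp [Equiv.Perm.mul_apply, Equiv.swap_apply_left]

private lemma perm_sum_const' (R : Fin n → Fin n → ℝ) {i j k l : Fin n}
    (hij : i ≠ j) (hkl : k ≠ l) :
    ∑ π : Equiv.Perm (Fin n), R (π i) (π j) = ∑ π : Equiv.Perm (Fin n), R (π k) (π l) := by
  obtain ⟨σ, h1, h2⟩ := exists_perm_two' hij hkl
  have h := Equiv.sum_comp (Equiv.mulRight σ) (fun π : Equiv.Perm (Fin n) => R (π k) (π l))
  simp only [Equiv.coe_mulRight, Equiv.Perm.mul_apply, h1, h2] at h
  exact h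

private lemma pexp_quad' (hn : 4 ≤ n) (R : Fin n → Fin n → ℝ)
    (hdiag : ∀ i, R i i = 0) (p : Fin n → Prop) [DecidablePred p] :
    pexp n (fun π => ∑ i : Fin n, ∑ j : Fin n, if p i ∧ p j then R (π i) (π j) else 0)
      = (((univ.filter p).card : ℝ) * (((univ.filter p).card : ℝ) - 1)) * r0 n R := by
  have hnR : (4:ℝ) ≤ (n:ℝ) := by exact_mod_cast hn
  have hn0 : (n:ℝ) ≠ 0 := by linarith
  have hn1 : (n:ℝ) - 1 ≠ 0 := by linarith
  have hnn1 : (n:ℝ) * ((n:ℝ) - 1) ≠ 0 := mul_ne_zero hn0 hn1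
  have hfac : ((Nat.factorial n : ℕ) : ℝ) ≠ 0 := by
    exact_mod_cast Nat.factorial_ne_zero n
  have h0n : 0 < n := by omega
  have h1n : 1 < n := by omega
  set i0 : Fin n := ⟨0, h0n⟩
  set j0 : Fin n := ⟨1, h1n⟩
  have hij0 : i0 ≠ j0 := by simp [i0, j0, Fin.ext_iff]
  set C : ℝ := ∑ π : Equiv.Perm (Fin n), R (π i0) (π j0) with hCdef
  set S : ℝ := ∑ a : Fin n, ∑ b : Fin n, R a b with hSdef
  have hval : ∀ k l : Fin n, (∑ π : Equiv.Perm (Fin n), R (π k) (π l))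
      = if k = l then 0 else C := by
    intro k l
    by_cases h : k = l
    · subst h; simp [hdiag]
    · rw [if_neg h]; exact perm_sum_const' R h hij0
  have ha : ∑ k : Fin n, ∑ l : Fin n, ∑ π : Equiv.Perm (Fin n), R (π k) (π l)
      = (Nat.factorial n : ℝ) * S := by
    calc ∑ k : Fin n, ∑ l : Fin n, ∑ π : Equiv.Perm (Fin n), R (π k) (π l)
        = ∑ k : Fin n, ∑ π : Equiv.Perm (Fin n), ∑ l : Fin n, R (π k) (π l) :=
          Finset.sum_congr rfl (fun k _ => Finset.sum_comm)
      _ = ∑ π : Equiv.Perm (Fin n), ∑ k : Fin n, ∑ l : Fin n, R (π k) (π l) :=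
          Finset.sum_comm
      _ = ∑ _π : Equiv.Perm (Fin n), S := by
          refine Finset.sum_congr rfl (fun π _ => ?_)
          calc ∑ k : Fin n, ∑ l : Fin n, R (π k) (π l)
              = ∑ a : Fin n, ∑ l : Fin n, R a (π l) :=
                Equiv.sum_comp π (fun a => ∑ l : Fin n, R a (π l))
            _ = S := Finset.sum_congr rfl (fun a _ => Equiv.sum_comp π (R a))
      _ = (Nat.factorial n : ℝ) * S := by
          simp [Finset.sum_const, Finset.card_univ, Fintype.card_perm, Fintype.card_fin,
            nsmul_eq_mul]
  have hb : ∑ k : Fin n, ∑ l : Fin n, (if k = l then (0:ℝ) else C)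
      = (n:ℝ) * ((n:ℝ) - 1) * C := by
    have hrow : ∀ k : Fin n, ∑ l : Fin n, (if k = l then (0:ℝ) else C) = (n:ℝ) * C - C := by
      intro k
      have hpt : ∀ l : Fin n, (if k = l then (0:ℝ) else C) = C - (if k = l then C else 0) := by
        intro l; by_cases h : k = l <;> simp [h]
      rw [Finset.sum_congr rfl (fun l _ => hpt l), Finset.sum_sub_distrib, Finset.sum_const,
        Finset.sum_ite_eq, Finset.card_univ, Fintype.card_fin]
      simp [nsmul_eq_mul]
    rw [Finset.sum_congr rfl (fun k _ => hrow k), Finset.sum_const, Finset.card_univ,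
      Fintype.card_fin]
    simp only [nsmul_eq_mul]; ring
  have hCS : (n:ℝ) * ((n:ℝ) - 1) * C = (Nat.factorial n : ℝ) * S := by
    rw [← hb, ← ha]
    exact (Finset.sum_congr rfl fun k _ => Finset.sum_congr rfl fun l _ => hval k l).symm
  have hr0 : r0 n R = S / ((n:ℝ) * ((n:ℝ) - 1)) := by
    unfold r0 Rbar
    rw [← Finset.sum_div, ← hSdef, div_div, mul_comm]
  have hC : C = (Nat.factorial n : ℝ) * r0 n R := by
    rw [hr0, ← mul_div_assoc, eq_div_iff hnn1]
    linear_combination hCS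
  set χ : Fin n → ℝ := fun i => if p i then 1 else 0 with hχ
  have hc : ∑ i : Fin n, χ i = ((univ.filter p).card : ℝ) := by
    simp [hχ, Finset.sum_boole]
  have hmain : ∑ π : Equiv.Perm (Fin n),
        (∑ i : Fin n, ∑ j : Fin n, if p i ∧ p j then R (π i) (π j) else 0)
      = ((∑ i : Fin n, χ i) * (∑ i : Fin n, χ i) - (∑ i : Fin n, χ i)) * C := by
    calc ∑ π : Equiv.Perm (Fin n),
          (∑ i : Fin n, ∑ j : Fin n, if p i ∧ p j then R (π i) (π j) else 0)
        = ∑ i : Fin n, ∑ π : Equiv.Perm (Fin n),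
            (∑ j : Fin n, if p i ∧ p j then R (π i) (π j) else 0) := Finset.sum_comm
      _ = ∑ i : Fin n, ∑ j : Fin n, ∑ π : Equiv.Perm (Fin n),
            (if p i ∧ p j then R (π i) (π j) else 0) :=
          Finset.sum_congr rfl (fun i _ => Finset.sum_comm)
      _ = ∑ i : Fin n, ∑ j : Fin n,
            (χ i * χ j * C - (if i = j then χ i * C else 0)) := by
          refine Finset.sum_congr rfl (fun i _ => Finset.sum_congr rfl (fun j _ => ?_))
          have hpull : ∑ π : Equiv.Perm (Fin n), (if p i ∧ p j then R (π i) (π j) else 0)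
              = if p i ∧ p j then ∑ π : Equiv.Perm (Fin n), R (π i) (π j) else 0 := by
            split_ifs <;> simp
          rw [hpull, hval i j]
          by_cases h3 : i = j
          · subst h3
            by_cases h1 : p i <;> simp [h1, hχ]
          · by_cases h1 : p i <;> by_cases h2 : p j <;> simp [h1, h2, h3, hχ]
      _ = ((∑ i : Fin n, χ i) * (∑ i : Fin n, χ i) - (∑ i : Fin n, χ i)) * C := by
          have hrow2 : ∀ i : Fin n,
              ∑ j : Fin n, (χ i * χ j * C - if i = j then χ i * C else 0)
                = χ i * ((∑ j : Fin n, χ j) * C - C) := by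
            intro i
            rw [Finset.sum_sub_distrib, Finset.sum_ite_eq, if_pos (Finset.mem_univ i)]
            have : ∀ j : Fin n, χ i * χ j * C = χ i * (χ j * C) := fun j => by ring
            rw [Finset.sum_congr rfl (fun j _ => this j), ← Finset.mul_sum, ← Finset.sum_mul]
            ring
          rw [Finset.sum_congr rfl (fun i _ => hrow2 i), ← Finset.sum_mul]
          ring
  unfold pexp
  rw [hmain, hc, hC]
  rw [div_eq_iff hfac]
  ring

private lemma pexp_linwt (a b d : ℝ) (f g : Equiv.Perm (Fin n) → ℝ) :
    pexp n (fun π => (a * f π + b * g π) / d) = (a * pexp n f + b * pexp n g) / d := by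
  unfold pexp
  rw [show (fun π => (a * f π + b * g π) / d)
      = fun π => (a / d) * f π + (b / d) * g π from funext fun π => by ring]
  rw [Finset.sum_add_distrib, ← Finset.mul_sum, ← Finset.mul_sum]
  ring

private lemma pexp_sub (f g : Equiv.Perm (Fin n) → ℝ) :
    pexp n (fun π => f π - g π) = pexp n f - pexp n g := by
  unfold pexp
  rw [Finset.sum_sub_distrib, sub_div]

end AuxRing

open RING

/-- Under the permutation null distribution, for all integers `0 ≤ t1 < t2 ≤ n`,
`𝔼[U_w^π(t1,t2)] = n(t2 − t1 − 1)(n − t2 + t1 − 1)·r0/(n−2)` and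
`𝔼[U_diff^π(t1,t2)] = (n−1)(2(t2 − t1) − n)·r0`. -/
theorem stmt5 (n : ℕ) (hn : 4 ≤ n) (R : Fin n → Fin n → ℝ)
    (hsym : ∀ i j, R i j = R j i) (hdiag : ∀ i, R i i = 0)
    (t1 t2 : ℕ) (h12 : t1 < t2) (h2n : t2 ≤ n) :
    pexp n (fun π => Uw n R π t1 t2)
        = (n : ℝ) * ((t2 : ℝ) - t1 - 1) * ((n : ℝ) - t2 + t1 - 1) * r0 n R / ((n : ℝ) - 2)
      ∧ pexp n (fun π => Udiff n R π t1 t2)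
        = ((n : ℝ) - 1) * (2 * ((t2 : ℝ) - t1) - n) * r0 n R := by
  classical
  have hnR : (4:ℝ) ≤ (n:ℝ) := by exact_mod_cast hn
  have hn2 : (n:ℝ) - 2 ≠ 0 := by linarith
  -- cardinalities
  have hcard1 : (((univ.filter (fun i : Fin n => t1 ≤ (i:ℕ) ∧ (i:ℕ) < t2)).card : ℕ) : ℝ)
      = (t2:ℝ) - t1 := by
    have hfe : (univ.filter (fun i : Fin n => t1 ≤ (i:ℕ) ∧ (i:ℕ) < t2)).card
        = ((Finset.range n).filter (fun i => t1 ≤ i ∧ i < t2)).card := by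
      rw [Finset.card_filter, Finset.card_filter,
        Fin.sum_univ_eq_sum_range (fun i => if t1 ≤ i ∧ i < t2 then 1 else 0) n]
    rw [hfe]
    have : (Finset.range n).filter (fun i => t1 ≤ i ∧ i < t2) = Finset.Ico t1 t2 := by
      ext i
      simp only [Finset.mem_filter, Finset.mem_range, Finset.mem_Ico]
      omega
    rw [this, Nat.card_Ico, Nat.cast_sub (le_of_lt h12)]
  have hcard2 : (((univ.filter (fun i : Fin n => (i:ℕ) < t1 ∨ t2 ≤ (i:ℕ))).card : ℕ) : ℝ)
      = (n:ℝ) - t2 + t1 := by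
    have hfe : (univ.filter (fun i : Fin n => (i:ℕ) < t1 ∨ t2 ≤ (i:ℕ))).card
        = ((Finset.range n).filter (fun i => i < t1 ∨ t2 ≤ i)).card := by
      rw [Finset.card_filter, Finset.card_filter,
        Fin.sum_univ_eq_sum_range (fun i => if i < t1 ∨ t2 ≤ i then 1 else 0) n]
    rw [hfe]
    have : (Finset.range n).filter (fun i => i < t1 ∨ t2 ≤ i)
        = Finset.range t1 ∪ Finset.Ico t2 n := by
      ext i
      simp only [Finset.mem_filter, Finset.mem_range, Finset.mem_union, Finset.mem_Ico]
      omega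
    rw [this, Finset.card_union_of_disjoint, Finset.card_range, Nat.card_Ico]
    · rw [Nat.cast_add, Nat.cast_sub h2n]; ring
    · simp only [Finset.disjoint_left, Finset.mem_range, Finset.mem_Ico]
      omega
  -- expectations of U1 and U2
  have hE1 : pexp n (fun π => U1 n R π t1 t2)
      = (((t2:ℝ) - t1) * (((t2:ℝ) - t1) - 1)) * r0 n R := by
    have heq : (fun π : Equiv.Perm (Fin n) => U1 n R π t1 t2)
        = fun π => ∑ i : Fin n, ∑ j : Fin n,
            if (fun i : Fin n => t1 ≤ (i:ℕ) ∧ (i:ℕ) < t2) i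
              ∧ (fun j : Fin n => t1 ≤ (j:ℕ) ∧ (j:ℕ) < t2) j then R (π i) (π j) else 0 := by
      funext π
      unfold U1
      refine Finset.sum_congr rfl (fun i _ => Finset.sum_congr rfl (fun j _ => ?_))
      exact if_congr (by tauto) rfl rfl
    rw [heq, pexp_quad' hn R hdiag, hcard1]
  have hE2 : pexp n (fun π => U2 n R π t1 t2)
      = (((n:ℝ) - t2 + t1) * (((n:ℝ) - t2 + t1) - 1)) * r0 n R := by
    have heq : (fun π : Equiv.Perm (Fin n) => U2 n R π t1 t2)
        = fun π => ∑ i : Fin n, ∑ j : Fin n,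
            if (fun i : Fin n => (i:ℕ) < t1 ∨ t2 ≤ (i:ℕ)) i
              ∧ (fun j : Fin n => (j:ℕ) < t1 ∨ t2 ≤ (j:ℕ)) j then R (π i) (π j) else 0 := by
      funext π
      unfold U2
      rfl
    rw [heq, pexp_quad' hn R hdiag, hcard2]
  constructor
  · have : (fun π : Equiv.Perm (Fin n) => Uw n R π t1 t2)
        = fun π => (((n:ℝ) - t2 + t1 - 1) * (U1 n R π t1 t2)
            + ((t2:ℝ) - t1 - 1) * (U2 n R π t1 t2)) / ((n:ℝ) - 2) := by
      funext π; rfl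
    rw [this, pexp_linwt, hE1, hE2]
    rw [div_eq_div_iff hn2 hn2]
    ring
  · have : (fun π : Equiv.Perm (Fin n) => Udiff n R π t1 t2)
        = fun π => U1 n R π t1 t2 - U2 n R π t1 t2 := by
      funext π; rfl
    rw [this, pexp_sub, hE1, hE2]
    ring
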